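/- Let h : ℝ → ℝ be nonnegative, continuous on [−τ, ∞), differentiable on [0, ∞), and satisfy h′(t) = γ(t)·h(t) + α(t)·h(t−τ)^p + β(t) for all t ≥ 0. Then for all t ≥ τ, h′(t) ≤ γ(t)·h(t) + α(t)·σ(t)^p·h(t)^p + β(t), where σ(t) := exp(−∫_{t−τ}^t γ(ξ) dξ). -/

import Mathlib

open Real MeasureTheory Set Filter

/-- Inequality (12): a nonnegative solution of the delay equation satisfies the
delay-free differential inequality
`h'(t) ≤ γ(t) h(t) + α(t) σ(t)^p h(t)^p + β(t)` for `t ≥ τ`,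
where `σ(t) = exp(−∫_{t−τ}^t γ)`. -/
theorem stmt_5
    (τ p : ℝ) (hτ : 0 < τ) (hp : 1 < p)
    (γ α β : ℝ → ℝ)
    (hγc : Continuous γ) (hαc : Continuous α) (hβc : Continuous β)
    (hα : ∀ t, 0 ≤ α t) (hβ : ∀ t, 0 ≤ β t)
    (h h' : ℝ → ℝ)
    (hh0 : ∀ t, -τ ≤ t → 0 ≤ h t)
    (hhc : ContinuousOn h (Ici (-τ)))
    (hhd : ∀ t, 0 ≤ t → HasDerivWithinAt h (h' t) (Ici (0:ℝ)) t)
    (hheq : ∀ t, 0 ≤ t → h' t = γ t * h t + α t * h (t - τ) ^ p + β t) :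
    ∀ t, τ ≤ t →
      h' t ≤ γ t * h t
        + α t * (Real.exp (-∫ ξ in (t - τ)..t, γ ξ)) ^ p * h t ^ p + β t := by
  intro t ht
  set F : ℝ → ℝ := fun u => ∫ ξ in (0:ℝ)..u, γ ξ with hF
  have hFd : ∀ u : ℝ, HasDerivAt F (γ u) u := fun u =>
    (hγc.integral_hasStrictDerivAt 0 u).hasDerivAt
  set g : ℝ → ℝ := fun u => h u * Real.exp (-F u) with hg
  have hgd : ∀ u, 0 ≤ u →
      HasDerivWithinAt g ((h' u - γ u * h u) * Real.exp (-F u)) (Ici (0:ℝ)) u := by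
    intro u hu
    have hE : HasDerivAt (fun v => Real.exp (-F v)) (Real.exp (-F u) * (-γ u)) u :=
      ((hFd u).neg).exp
    have := (hhd u hu).mul hE.hasDerivWithinAt
    refine this.congr_deriv ?_
    ring
  have hdiff : ∀ u, 0 ≤ u → 0 ≤ h' u - γ u * h u := by
    intro u hu
    rw [hheq u hu]
    have h1 : 0 ≤ α u * h (u - τ) ^ p :=
      mul_nonneg (hα u) (Real.rpow_nonneg (hh0 _ (by linarith)) p)
    have := hβ u
    nlinarith
  have hgc : ContinuousOn g (Ici (0:ℝ)) := by
    apply ContinuousOn.mul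
    · exact hhc.mono (fun x hx => le_trans (by linarith : -τ ≤ 0) hx)
    · exact (Real.continuous_exp.comp ((intervalIntegral.continuous_primitive
        (fun a b => hγc.intervalIntegrable a b) 0).neg)).continuousOn
  have hmono : MonotoneOn g (Ici (0:ℝ)) := by
    apply monotoneOn_of_deriv_nonneg (convex_Ici 0) hgc
    · intro x hx
      rw [interior_Ici] at hx
      exact ((hgd x (le_of_lt hx)).hasDerivAt (Ici_mem_nhds hx)).differentiableAt.differentiableWithinAt
    · intro x hx
      rw [interior_Ici] at hx
      rw [((hgd x (le_of_lt hx)).hasDerivAt (Ici_mem_nhds hx)).deriv]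
      exact mul_nonneg (hdiff x (le_of_lt hx)) (Real.exp_pos _).le
  have hgle : g (t - τ) ≤ g t :=
    hmono (by simp; linarith) (by simp; linarith) (by linarith)
  -- translate to h (t - τ) ≤ exp(-∫) * h t
  have hFsub : F t - F (t - τ) = ∫ ξ in (t - τ)..t, γ ξ :=
    intervalIntegral.integral_interval_sub_left (hγc.intervalIntegrable 0 t)
      (hγc.intervalIntegrable 0 (t - τ))
  have hkey : h (t - τ) ≤ Real.exp (-∫ ξ in (t - τ)..t, γ ξ) * h t := by
    have h2 : h (t - τ) * Real.exp (-F (t - τ)) ≤ h t * Real.exp (-F t) := hgle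
    have h3 := mul_le_mul_of_nonneg_right h2 (Real.exp_pos (F (t - τ))).le
    rw [mul_assoc, mul_assoc, ← Real.exp_add, ← Real.exp_add] at h3
    simp only [neg_add_cancel, Real.exp_zero, mul_one] at h3
    calc h (t - τ) ≤ h t * Real.exp (-F t + F (t - τ)) := h3
      _ = Real.exp (-∫ ξ in (t - τ)..t, γ ξ) * h t := by
        rw [← hFsub]; ring_nf
  have hpow : h (t - τ) ^ p ≤ (Real.exp (-∫ ξ in (t - τ)..t, γ ξ)) ^ p * h t ^ p := by
    have hp0 : (0:ℝ) ≤ p := by linarith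
    have := Real.rpow_le_rpow (hh0 _ (by linarith)) hkey hp0
    rwa [Real.mul_rpow (Real.exp_pos _).le (hh0 _ (by linarith))] at this
  rw [hheq t (by linarith)]
  have : α t * h (t - τ) ^ p ≤ α t * ((Real.exp (-∫ ξ in (t - τ)..t, γ ξ)) ^ p * h t ^ p) :=
    mul_le_mul_of_nonneg_left hpow (hα t)
  linarith [this]
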